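/- Fix h ∈ ℂ and r ∈ ℂ. On A = ℂ[x⁰,x¹,x²,x³] with p_μ := −i∂_μ, define the right-handed Jordanian operators x̂⁰_{R,r} := x⁰∘(1 − rh·p₀) + h·Σ_{k=1}^{3} x^k∘p_k and x̂^j_{R,r} := x^j (multiplication by x^j) for j = 1,2,3. Then [x̂⁰_{R,r}, x̂^j_{R,r}] = −ih·x̂^j_{R,r} and [x̂^j_{R,r}, x̂^k_{R,r}] = 0 for all j,k ∈ {1,2,3}. -/

import Mathlib

open MvPolynomial

noncomputable section

/-- The multiplication-by-`x^μ` operator on `ℂ[x⁰,x¹,x²,x³]`. -/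
def Xop (μ : Fin 4) : Module.End ℂ (MvPolynomial (Fin 4) ℂ) :=
  LinearMap.mulLeft ℂ (X μ)

/-- The partial-derivative operator `∂_μ` on `ℂ[x⁰,x¹,x²,x³]`. -/
def Dop (μ : Fin 4) : Module.End ℂ (MvPolynomial (Fin 4) ℂ) :=
  (pderiv μ).toLinearMap

/-- The momentum operator `p_μ := −i∂_μ`. -/
def Pop (μ : Fin 4) : Module.End ℂ (MvPolynomial (Fin 4) ℂ) :=
  (-Complex.I) • Dop μ

/-- The right-handed Jordanian operator `x̂⁰_{R,r} := x⁰∘(1 − rh·p₀) + h·Σ_{k=1}^{3} x^k∘p_k`. -/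
def xhat0R (r h : ℂ) : Module.End ℂ (MvPolynomial (Fin 4) ℂ) :=
  Xop 0 * (1 - (r * h) • Pop 0) + h • ∑ k ∈ ({1, 2, 3} : Finset (Fin 4)), Xop k * Pop k

set_option maxHeartbeats 1600000 in
/-- The right-handed realization of the Jordanian twist satisfies the κ-Minkowski relations
with the opposite sign of the deformation parameter:
`[x̂⁰_{R,r}, x̂^j_{R,r}] = −ih·x̂^j_{R,r}` and `[x̂^j_{R,r}, x̂^k_{R,r}] = 0`. -/
theorem jordanian_right_realization (r h : ℂ) :
    (∀ j ∈ ({1, 2, 3} : Finset (Fin 4)),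
      xhat0R r h * Xop j - Xop j * xhat0R r h = (-(Complex.I * h)) • Xop j) ∧
    (∀ j ∈ ({1, 2, 3} : Finset (Fin 4)), ∀ k ∈ ({1, 2, 3} : Finset (Fin 4)),
      Xop j * Xop k - Xop k * Xop j = 0) := by
  constructor
  · intro j hj
    simp only [Finset.mem_insert, Finset.mem_singleton] at hj
    rcases hj with rfl | rfl | rfl <;>
    · ext p
      simp [xhat0R, Pop, Dop, Xop, Module.End.mul_apply, pderiv_mul, pderiv_X_of_ne,
        pderiv_X_self, Finset.sum_insert, Finset.sum_singleton, mul_add, mul_sub, smul_smul]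
      ring
  · intro j _ k _
    ext p
    simp [Xop, Module.End.mul_apply]
    ring

end
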